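/- Let Z be standard Gaussian and Φ its CDF. Then for every real x, Φ(x) = E[𝟙(Z/√2 + x/√2 > 0)], i.e., P[Z > -x] = Φ(x), and consequently the Hermite coefficients of Φ satisfy ℓ_{2q+1} = d_{2q+1}·2^{-q-1/2}, where 𝟙[·>0] = 1/2 + ∑_q d_{2q+1}H_{2q+1} and Φ = 1/2 + ∑_q ℓ_{2q+1}H_{2q+1} in L²(ℝ, γ). -/

import Mathlib

open MeasureTheory ProbabilityTheory Polynomial Real Filter Set
open scoped ENNReal NNReal

noncomputable section AuxGCH

namespace AuxGCH

/-- standard gaussian pdf -/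
def gpdf (t : ℝ) : ℝ := Real.exp (-(t ^ 2 / 2)) / Real.sqrt (2 * Real.pi)

lemma gpdf_nonneg (t : ℝ) : 0 ≤ gpdf t := by
  unfold gpdf; positivity

lemma continuous_gpdf : Continuous gpdf := by
  unfold gpdf; fun_prop

lemma gaussianPDFReal_eq : gaussianPDFReal 0 1 = gpdf := by
  funext x
  simp only [gaussianPDFReal_def, NNReal.coe_one, mul_one, sub_zero]
  unfold gpdf
  rw [neg_div]
  ring

lemma gpdf_neg (t : ℝ) : gpdf (-t) = gpdf t := by simp [gpdf]

lemma gpdf_sq (t : ℝ) : gpdf t * gpdf t = (2 * Real.pi)⁻¹ * Real.exp (-1 * t ^ 2) := by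
  unfold gpdf
  rw [div_mul_div_comm, ← Real.exp_add, Real.mul_self_sqrt (by positivity)]
  rw [div_eq_inv_mul]
  have h : -(t ^ 2 / 2) + -(t ^ 2 / 2) = -1 * t ^ 2 := by ring
  rw [h]

lemma integrable_pow_mul_exp {b : ℝ} (hb : 0 < b) (n : ℕ) :
    Integrable (fun t : ℝ => t ^ n * Real.exp (-b * t ^ 2)) := by
  have h := integrable_rpow_mul_exp_neg_mul_sq hb (s := (n : ℝ))
    (lt_of_lt_of_le neg_one_lt_zero (Nat.cast_nonneg n))
  simpa [Real.rpow_natCast] using h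

lemma integrable_poly_mul_exp {b : ℝ} (hb : 0 < b) (p : Polynomial ℤ) :
    Integrable (fun t : ℝ => (aeval t p : ℝ) * Real.exp (-b * t ^ 2)) := by
  induction p using Polynomial.induction_on' with
  | add p q hp hq => exact (hp.add hq).congr (ae_of_all _ fun t => by simp only [Pi.add_apply, map_add]; ring)
  | monomial n a =>
      have := (integrable_pow_mul_exp hb n).const_mul (a : ℝ)
      refine this.congr ?_
      filter_upwards with t
      simp [aeval_monomial]
      ring


lemma integrable_poly_gpdf (p : Polynomial ℤ) :
    Integrable (fun t : ℝ => (aeval t p : ℝ) * gpdf t) := by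
  have h := (integrable_poly_mul_exp (by norm_num : (0:ℝ) < 1/2) p).div_const (Real.sqrt (2 * Real.pi))
  refine h.congr ?_
  filter_upwards with t
  unfold gpdf
  rw [mul_div_assoc]
  congr 2
  ring

lemma integrable_gpdf : Integrable gpdf := by
  simpa using integrable_poly_gpdf 1

lemma derivative_hermite (n : ℕ) :
    derivative (hermite (n + 1)) = C ((n : ℤ) + 1) * hermite n := by
  induction n with
  | zero => simp [hermite_one, hermite_zero]
  | succ n ih =>
    rw [hermite_succ (n + 1), derivative_sub, derivative_mul, derivative_X, one_mul, ih,
      derivative_C_mul, hermite_succ n]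
    have hc : C (((n + 1 : ℕ) : ℤ) + 1) = C ((n : ℤ) + 1) + 1 := by
      push_cast
      rw [map_add, map_one]
    rw [hc]
    ring

lemma hasDerivAt_aeval_hermite (n : ℕ) (t : ℝ) :
    HasDerivAt (fun t : ℝ => (aeval t (hermite (n + 1)) : ℝ))
      (((n : ℝ) + 1) * (aeval t (hermite n) : ℝ)) t := by
  have h := (hermite (n + 1)).hasDerivAt_aeval (𝕜 := ℝ) t
  rwa [derivative_hermite, map_mul, aeval_C, algebraMap_int_eq, eq_intCast,
    Int.cast_add, Int.cast_natCast, Int.cast_one] at h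

lemma hasDerivAt_gpdf (t : ℝ) : HasDerivAt gpdf (-t * gpdf t) t := by
  have h1 : HasDerivAt (fun t : ℝ => -(t ^ 2 / 2)) (-t) t := by
    have := ((hasDerivAt_pow 2 t).div_const 2).neg
    exact this.congr_deriv (by ring)
  have h2 := (h1.exp).div_const (Real.sqrt (2 * Real.pi))
  unfold gpdf
  exact h2.congr_deriv (by ring)

/-- key derivative: `(-H_n·φ)' = H_{n+1}·φ` -/
lemma hasDerivAt_neg_hermite_gpdf (n : ℕ) (t : ℝ) :
    HasDerivAt (fun t : ℝ => -(aeval t (hermite n) : ℝ) * gpdf t)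
      ((aeval t (hermite (n + 1)) : ℝ) * gpdf t) t := by
  have h := (((hermite n).hasDerivAt_aeval (𝕜 := ℝ) t).neg).mul (hasDerivAt_gpdf t)
  refine h.congr_deriv ?_
  rw [hermite_succ, map_sub, map_mul, aeval_X, Pi.neg_apply]
  ring


lemma cdf_gaussian_eq (x : ℝ) :
    cdf (gaussianReal 0 1) x = ∫ t in Iic x, gpdf t := by
  rw [cdf_eq_real, measureReal_def, gaussianReal_apply_eq_integral 0 one_ne_zero,
    ENNReal.toReal_ofReal (by
      apply integral_nonneg
      intro t
      exact gaussianPDFReal_nonneg 0 1 t), gaussianPDFReal_eq]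

lemma abs_cdf_le_one (x : ℝ) : |cdf (gaussianReal 0 1) x| ≤ 1 := by
  rw [abs_le]
  exact ⟨le_trans (by norm_num) (cdf_nonneg (gaussianReal 0 1) x), cdf_le_one (gaussianReal 0 1) x⟩

lemma hasDerivAt_cdf (x : ℝ) : HasDerivAt (cdf (gaussianReal 0 1)) (gpdf x) x := by
  have h := (continuous_gpdf.integral_hasStrictDerivAt 0 x).hasDerivAt
  have heq : (cdf (gaussianReal 0 1) : ℝ → ℝ) =
      fun y => (∫ t in Iic (0:ℝ), gpdf t) + ∫ t in (0:ℝ)..y, gpdf t := by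
    funext y
    rw [cdf_gaussian_eq, ← intervalIntegral.integral_Iic_sub_Iic integrable_gpdf.integrableOn
      integrable_gpdf.integrableOn]
    ring
  rw [heq]
  exact h.const_add _

lemma integral_gaussianReal_eq (f : ℝ → ℝ) :
    ∫ t, f t ∂(gaussianReal 0 1) = ∫ t, f t * gpdf t := by
  rw [gaussianReal_of_var_ne_zero 0 one_ne_zero]
  have hpdf : gaussianPDF 0 1 = fun t => ((Real.toNNReal (gpdf t) : ℝ≥0) : ℝ≥0∞) := by
    funext t
    rw [gaussianPDF_def, gaussianPDFReal_eq]
    rfl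
  rw [hpdf, integral_withDensity_eq_integral_smul
    (continuous_gpdf.measurable.real_toNNReal) f]
  congr 1
  funext t
  rw [NNReal.smul_def, smul_eq_mul, Real.coe_toNNReal _ (gpdf_nonneg t), mul_comm]


lemma integrable_poly_gpdf_sq (p : Polynomial ℤ) :
    Integrable (fun t : ℝ => (aeval t p : ℝ) * (gpdf t * gpdf t)) := by
  have h := (integrable_poly_mul_exp (by norm_num : (0:ℝ) < 1) p).const_mul ((2 * Real.pi)⁻¹)
  refine h.congr ?_
  filter_upwards with t
  rw [gpdf_sq]
  ring

lemma aesm_cdf : AEStronglyMeasurable (fun t : ℝ => cdf (gaussianReal 0 1) t) volume :=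
  ((cdf (gaussianReal 0 1)).mono.measurable).aestronglyMeasurable

lemma key_ibp (n : ℕ) :
    ∫ t, (aeval t (hermite (n + 1)) : ℝ) * cdf (gaussianReal 0 1) t ∂(gaussianReal 0 1)
      = ∫ t, (aeval t (hermite n) : ℝ) * (gpdf t * gpdf t) := by
  rw [integral_gaussianReal_eq]
  have hbdd : ∃ C, ∀ x : ℝ, ‖cdf (gaussianReal 0 1) x‖ ≤ C := ⟨1, fun x => abs_cdf_le_one x⟩
  have hucv' : Integrable ((fun t : ℝ => cdf (gaussianReal 0 1) t) *
      (fun t : ℝ => (aeval t (hermite (n + 1)) : ℝ) * gpdf t)) :=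
    (integrable_poly_gpdf (hermite (n + 1))).bdd_mul aesm_cdf (ae_of_all _ fun x => abs_cdf_le_one x)
  have huv : Integrable ((fun t : ℝ => cdf (gaussianReal 0 1) t) *
      (fun t : ℝ => -(aeval t (hermite n) : ℝ) * gpdf t)) :=
    ((integrable_poly_gpdf (hermite n)).neg.congr (by
      filter_upwards with t
      simp only [Pi.neg_apply]
      ring)).bdd_mul aesm_cdf (ae_of_all _ fun x => abs_cdf_le_one x)
  have hu'v : Integrable ((fun t : ℝ => gpdf t) *
      (fun t : ℝ => -(aeval t (hermite n) : ℝ) * gpdf t)) := by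
    refine (integrable_poly_gpdf_sq (hermite n)).neg.congr ?_
    filter_upwards with t
    simp only [Pi.neg_apply, Pi.mul_apply]
    ring
  have hibp := integral_mul_deriv_eq_deriv_mul_of_integrable
    (fun x _ => hasDerivAt_cdf x) (fun x _ => hasDerivAt_neg_hermite_gpdf n x) hucv' hu'v huv
  have h1 : ∫ t, (aeval t (hermite (n + 1)) : ℝ) * cdf (gaussianReal 0 1) t * gpdf t
      = ∫ t, cdf (gaussianReal 0 1) t * ((aeval t (hermite (n + 1)) : ℝ) * gpdf t) := by
    congr 1
    funext t
    ring
  rw [h1, hibp, ← integral_neg]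
  congr 1
  funext t
  ring


def Ig (n : ℕ) : ℝ := ∫ t : ℝ, (aeval t (hermite n) : ℝ) * Real.exp (-1 * t ^ 2)

lemma Ig_zero : Ig 0 = Real.sqrt Real.pi := by
  unfold Ig
  simp only [hermite_zero, map_one, one_mul]
  simpa using integral_gaussian 1

lemma hasDerivAt_vexp (t : ℝ) :
    HasDerivAt (fun t : ℝ => -(2:ℝ)⁻¹ * Real.exp (-1 * t ^ 2)) (t * Real.exp (-1 * t ^ 2)) t := by
  have h1 : HasDerivAt (fun t : ℝ => -1 * t ^ 2) (-2 * t) t := by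
    have := (hasDerivAt_pow 2 t).const_mul (-1 : ℝ)
    exact this.congr_deriv (by simp)
  have h2 := (h1.exp).const_mul (-(2:ℝ)⁻¹)
  exact h2.congr_deriv (by ring)

lemma Ig_rec (n : ℕ) : Ig (n + 2) = -(((n : ℝ) + 1) / 2) * Ig n := by
  have hexp : ∀ (p : Polynomial ℤ),
      Integrable (fun t : ℝ => (aeval t p : ℝ) * Real.exp (-1 * t ^ 2)) :=
    fun p => integrable_poly_mul_exp one_pos p
  have hsplit : ∀ t : ℝ, (aeval t (hermite (n + 2)) : ℝ)
      = t * (aeval t (hermite (n + 1)) : ℝ) - ((n : ℝ) + 1) * (aeval t (hermite n) : ℝ) := by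
    intro t
    rw [hermite_succ (n + 1), map_sub, map_mul, aeval_X, derivative_hermite, map_mul, aeval_C,
      algebraMap_int_eq, eq_intCast, Int.cast_add, Int.cast_natCast, Int.cast_one]
  have hXint : Integrable
      (fun t : ℝ => (aeval t (hermite (n+1)) : ℝ) * (t * Real.exp (-1 * t ^ 2))) := by
    refine (hexp (X * hermite (n+1))).congr ?_
    filter_upwards with t
    rw [map_mul, aeval_X]
    ring
  have hucv' : Integrable ((fun t : ℝ => (aeval t (hermite (n+1)) : ℝ)) *
      (fun t : ℝ => t * Real.exp (-1 * t ^ 2))) := by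
    refine hXint.congr ?_
    filter_upwards with t
    simp only [Pi.mul_apply]
  have hu'v : Integrable ((fun t : ℝ => ((n:ℝ)+1) * (aeval t (hermite n) : ℝ)) *
      (fun t : ℝ => -(2:ℝ)⁻¹ * Real.exp (-1 * t ^ 2))) := by
    refine ((hexp (hermite n)).const_mul (((n:ℝ)+1) * -(2:ℝ)⁻¹)).congr ?_
    filter_upwards with t
    simp only [Pi.mul_apply]
    ring
  have huv : Integrable ((fun t : ℝ => (aeval t (hermite (n+1)) : ℝ)) *
      (fun t : ℝ => -(2:ℝ)⁻¹ * Real.exp (-1 * t ^ 2))) := by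
    refine ((hexp (hermite (n+1))).const_mul (-(2:ℝ)⁻¹)).congr ?_
    filter_upwards with t
    simp only [Pi.mul_apply]
    ring
  have hibp := integral_mul_deriv_eq_deriv_mul_of_integrable
    (fun x _ => hasDerivAt_aeval_hermite n x) (fun x _ => hasDerivAt_vexp x) hucv' hu'v huv
  have e1 : Ig (n + 2)
      = (∫ t : ℝ, (aeval t (hermite (n+1)) : ℝ) * (t * Real.exp (-1 * t ^ 2)))
        - ((n:ℝ)+1) * Ig n := by
    unfold Ig
    rw [← integral_const_mul, ← integral_sub hXint ((hexp (hermite n)).const_mul _)]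
    congr 1
    funext t
    rw [hsplit t]
    ring
  have e2 : (∫ t : ℝ, (aeval t (hermite (n+1)) : ℝ) * (t * Real.exp (-1 * t ^ 2)))
      = (((n:ℝ)+1)/2) * Ig n := by
    rw [hibp, ← integral_neg]
    unfold Ig
    rw [← integral_const_mul]
    congr 1
    funext t
    ring
  rw [e1, e2]
  ring

lemma Ig_closed (q : ℕ) : Ig (2 * q)
    = (-1 : ℝ) ^ q * (Nat.factorial (2 * q) : ℝ)
      / ((4 : ℝ) ^ q * (Nat.factorial q : ℝ)) * Real.sqrt Real.pi := by
  induction q with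
  | zero => simpa using Ig_zero
  | succ q ih =>
    have hidx : 2 * (q + 1) = (2 * q) + 2 := by ring
    rw [hidx, Ig_rec, ih]
    have hf1 : ((Nat.factorial (2 * q + 2) : ℝ)) =
        (2*(q:ℝ)+2) * ((2*(q:ℝ)+1) * (Nat.factorial (2 * q) : ℝ)) := by
      rw [show 2*q+2 = (2*q+1)+1 by ring, Nat.factorial_succ, Nat.factorial_succ]
      push_cast
      ring
    have hf2 : ((Nat.factorial (q + 1) : ℝ)) = ((q:ℝ)+1) * (Nat.factorial q : ℝ) := by
      rw [Nat.factorial_succ]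
      push_cast
      ring
    rw [show (2 * q) + 2 = 2 * q + 2 from rfl, hf1, hf2]
    have h4 : ((4:ℝ) ^ q) ≠ 0 := by positivity
    have hq : ((Nat.factorial q : ℝ)) ≠ 0 := Nat.cast_ne_zero.mpr (Nat.factorial_ne_zero q)
    have hc : ((2*q : ℕ) : ℝ) = 2*(q:ℝ) := by push_cast; ring
    rw [hc]
    field_simp
    ring

end AuxGCH

section Main
open AuxGCH

/-- For `Z` standard Gaussian with CDF `Φ`: `Φ(x) = E[𝟙(Z/√2 + x/√2 > 0)] = P[Z > -x]`
for every `x`, and consequently the Hermite coefficients of `Φ` satisfy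
`ℓ_{2q+1} = d_{2q+1}·2^{-q-1/2}` with `d_{2q+1} = (-1)^q/(2^q q! (2q+1)√(2π))`,
the Hermite coefficient of the half-space indicator. -/
theorem gaussian_cdf_hermite_coefficients :
    (∀ x : ℝ,
      cdf (gaussianReal 0 1) x =
        ((gaussianReal 0 1) {t : ℝ | t / Real.sqrt 2 + x / Real.sqrt 2 > 0}).toReal) ∧
    (∀ q : ℕ,
      (1 / (Nat.factorial (2 * q + 1) : ℝ)) *
          ∫ t, (Polynomial.aeval t (Polynomial.hermite (2 * q + 1)) : ℝ) *
            cdf (gaussianReal 0 1) t ∂(gaussianReal 0 1)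
        = ((-1 : ℝ) ^ q /
              ((2 : ℝ) ^ q * (Nat.factorial q : ℝ) * (2 * (q : ℝ) + 1) *
                Real.sqrt (2 * Real.pi))) *
            (((2 : ℝ) ^ q * Real.sqrt 2)⁻¹)) := by
  constructor
  · intro x
    have hset : {t : ℝ | t / Real.sqrt 2 + x / Real.sqrt 2 > 0} = Set.Ioi (-x) := by
      ext t
      simp only [Set.mem_setOf_eq, Set.mem_Ioi, gt_iff_lt, ← add_div]
      rw [lt_div_iff₀ (by positivity : (0:ℝ) < Real.sqrt 2), zero_mul]
      constructor <;> intro h <;> linarith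
    rw [hset, AuxGCH.cdf_gaussian_eq, gaussianReal_apply_eq_integral 0 one_ne_zero,
      ENNReal.toReal_ofReal (integral_nonneg fun t => gaussianPDFReal_nonneg 0 1 t),
      AuxGCH.gaussianPDFReal_eq]
    have hneg := integral_comp_neg_Ioi (c := -x) gpdf
    simp only [neg_neg] at hneg
    rw [← hneg]
    refine MeasureTheory.setIntegral_congr_fun measurableSet_Ioi fun t _ => ?_
    exact gpdf_neg t
  · intro q
    have h := AuxGCH.key_ibp (2 * q)
    rw [h]
    have h2 : (∫ t : ℝ, (Polynomial.aeval t (Polynomial.hermite (2*q)) : ℝ) * (gpdf t * gpdf t))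
        = (2 * Real.pi)⁻¹ * AuxGCH.Ig (2*q) := by
      unfold AuxGCH.Ig
      rw [← integral_const_mul]
      congr 1
      funext t
      rw [AuxGCH.gpdf_sq]
      ring
    rw [h2, AuxGCH.Ig_closed]
    have hfact : ((Nat.factorial (2*q+1) : ℝ)) = (2*(q:ℝ)+1) * (Nat.factorial (2*q) : ℝ) := by
      rw [Nat.factorial_succ]
      push_cast
      ring
    rw [hfact]
    have hs2 : Real.sqrt (2*Real.pi) = Real.sqrt 2 * Real.sqrt Real.pi :=
      Real.sqrt_mul (by norm_num) _
    have h2pi : (2*Real.pi) = (Real.sqrt 2 * Real.sqrt Real.pi) * (Real.sqrt 2 * Real.sqrt Real.pi) := by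
      rw [show (Real.sqrt 2 * Real.sqrt Real.pi) * (Real.sqrt 2 * Real.sqrt Real.pi)
          = (Real.sqrt 2 * Real.sqrt 2) * (Real.sqrt Real.pi * Real.sqrt Real.pi) by ring,
        Real.mul_self_sqrt (by norm_num : (0:ℝ) ≤ 2), Real.mul_self_sqrt Real.pi_pos.le]
    rw [hs2, h2pi]
    have h4 : ((4:ℝ) ^ q) = 2 ^ q * 2 ^ q := by
      rw [← mul_pow]
      norm_num
    rw [h4]
    have hr : Real.sqrt 2 ≠ 0 := by positivity
    have hs : Real.sqrt Real.pi ≠ 0 := by positivity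
    have hq : ((Nat.factorial q : ℝ)) ≠ 0 := Nat.cast_ne_zero.mpr (Nat.factorial_ne_zero q)
    have hq2 : ((Nat.factorial (2*q) : ℝ)) ≠ 0 := Nat.cast_ne_zero.mpr (Nat.factorial_ne_zero _)
    have h2q1 : (2*(q:ℝ)+1) ≠ 0 := by positivity
    have h2p : ((2:ℝ) ^ q) ≠ 0 := by positivity
    field_simp
end Main
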